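/- Let A be a seminormed ring. Every spectrally reduced ideal of A is contained in a spectrally reduced ideal that is maximal with respect to inclusion among the spectrally reduced ideals of A. -/
import Mathlib


open Filter Topology

/-- A bounded power-multiplicative (nonarchimedean, submultiplicative) ring seminorm
on a seminormed commutative ring. -/
structure IsBddPowMulSeminorm {A : Type*} [SeminormedCommRing A] (φ : A → ℝ) : Prop where
  nonneg : ∀ f, 0 ≤ φ f
  map_zero : φ 0 = 0
  map_one : φ 1 = 1
  map_neg : ∀ f, φ (-f) = φ f
  nonarch : ∀ f g, φ (f + g) ≤ max (φ f) (φ g)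
  submul : ∀ f g, φ (f * g) ≤ φ f * φ g
  pow_mul : ∀ f, ∀ n : ℕ, 1 ≤ n → φ (f ^ n) = φ f ^ n
  bounded : ∃ C > 0, ∀ f, φ f ≤ C * ‖f‖

/-- An ideal is spectrally reduced if it is the kernel of some bounded
power-multiplicative seminorm. -/
def IsSpectrallyReduced {A : Type*} [SeminormedCommRing A] (I : Ideal A) : Prop :=
  ∃ φ : A → ℝ, IsBddPowMulSeminorm φ ∧ ∀ f, f ∈ I ↔ φ f = 0

section Aux

variable {A : Type*} [SeminormedCommRing A]

/-- Any bounded power-multiplicative seminorm is bounded by the norm itself. -/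
lemma IsBddPowMulSeminorm.le_norm {φ : A → ℝ} (h : IsBddPowMulSeminorm φ) (f : A) :
    φ f ≤ ‖f‖ := by
  obtain ⟨C, hC, hb⟩ := h.bounded
  by_contra hcon
  push_neg at hcon
  have key : ∀ n : ℕ, 1 ≤ n → (φ f) ^ n ≤ C * ‖f‖ ^ n := by
    intro n hn
    calc (φ f) ^ n = φ (f ^ n) := (h.pow_mul f n hn).symm
      _ ≤ C * ‖f ^ n‖ := hb _
      _ ≤ C * ‖f‖ ^ n := by
          exact mul_le_mul_of_nonneg_left (norm_pow_le' f hn) hC.le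
  rcases le_or_gt ‖f‖ 0 with hf | hf
  · have hf0 : ‖f‖ = 0 := le_antisymm hf (norm_nonneg f)
    have : φ f ≤ 0 := by
      have := hb f; rw [hf0] at this; simpa using this
    exact absurd hcon (not_lt.mpr (this.trans (norm_nonneg f)))
  · set t := φ f / ‖f‖ with ht
    have ht1 : 1 < t := (one_lt_div hf).mpr hcon
    have htn : ∀ n : ℕ, 1 ≤ n → t ^ n ≤ C := by
      intro n hn
      rw [ht, div_pow, div_le_iff₀ (pow_pos hf n)]
      exact key n hn
    obtain ⟨n, hnC⟩ := pow_unbounded_of_one_lt C ht1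
    have : t ^ (n + 1) ≤ C := htn (n + 1) (Nat.le_add_left 1 n)
    have h2 : t ^ n ≤ t ^ (n + 1) := pow_le_pow_right₀ ht1.le (Nat.le_succ n)
    linarith

/-- The set of bounded power-multiplicative seminorms vanishing on an ideal. -/
def bpmsOn (J : Ideal A) : Set (A → ℝ) :=
  {φ | IsBddPowMulSeminorm φ ∧ ∀ g ∈ J, φ g = 0}

/-- The canonical (largest) bounded power-multiplicative seminorm vanishing on `J`. -/
noncomputable def bpmsSup (J : Ideal A) (f : A) : ℝ :=
  sSup ((fun φ => φ f) '' bpmsOn J)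

lemma bpmsSup_bddAbove (J : Ideal A) (f : A) :
    BddAbove ((fun φ => φ f) '' bpmsOn J) := by
  refine ⟨‖f‖, ?_⟩
  rintro x ⟨φ, hφ, rfl⟩
  exact hφ.1.le_norm f

lemma le_bpmsSup {J : Ideal A} {φ : A → ℝ} (hφ : φ ∈ bpmsOn J) (f : A) :
    φ f ≤ bpmsSup J f :=
  le_csSup (bpmsSup_bddAbove J f) ⟨φ, hφ, rfl⟩

lemma bpmsSup_le {J : Ideal A} (hne : (bpmsOn J).Nonempty) {f : A} {b : ℝ}
    (hb : ∀ φ ∈ bpmsOn J, φ f ≤ b) : bpmsSup J f ≤ b := by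
  apply csSup_le (hne.image _)
  rintro x ⟨φ, hφ, rfl⟩
  exact hb φ hφ

lemma bpmsSup_nonneg {J : Ideal A} (hne : (bpmsOn J).Nonempty) (f : A) :
    0 ≤ bpmsSup J f := by
  obtain ⟨φ, hφ⟩ := hne
  exact (hφ.1.nonneg f).trans (le_bpmsSup hφ f)

lemma bpmsSup_le_norm {J : Ideal A} (hne : (bpmsOn J).Nonempty) (f : A) :
    bpmsSup J f ≤ ‖f‖ :=
  bpmsSup_le hne fun φ hφ => hφ.1.le_norm f

lemma bpmsSup_antitone {J K : Ideal A} (hJK : J ≤ K) (hne : (bpmsOn K).Nonempty) (f : A) :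
    bpmsSup K f ≤ bpmsSup J f := by
  apply bpmsSup_le hne
  intro φ hφ
  exact le_bpmsSup ⟨hφ.1, fun g hg => hφ.2 g (hJK hg)⟩ f

lemma bpmsSup_isBdd {J : Ideal A} (hne : (bpmsOn J).Nonempty) :
    IsBddPowMulSeminorm (bpmsSup J) := by
  constructor
  · exact bpmsSup_nonneg hne
  · refine le_antisymm (bpmsSup_le hne fun φ hφ => ?_) (bpmsSup_nonneg hne 0)
    rw [hφ.1.map_zero]
  · refine le_antisymm (bpmsSup_le hne fun φ hφ => ?_) ?_
    · rw [hφ.1.map_one]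
    · obtain ⟨φ, hφ⟩ := hne
      have := le_bpmsSup hφ 1
      rwa [hφ.1.map_one] at this
  · intro f
    refine le_antisymm (bpmsSup_le hne fun φ hφ => ?_) (bpmsSup_le hne fun φ hφ => ?_)
    · rw [hφ.1.map_neg]; exact le_bpmsSup hφ f
    · rw [← hφ.1.map_neg]; exact le_bpmsSup hφ (-f)
  · intro f g
    apply bpmsSup_le hne
    intro φ hφ
    exact (hφ.1.nonarch f g).trans
      (max_le_max (le_bpmsSup hφ f) (le_bpmsSup hφ g))
  · intro f g
    apply bpmsSup_le hne
    intro φ hφ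
    exact (hφ.1.submul f g).trans
      (mul_le_mul (le_bpmsSup hφ f) (le_bpmsSup hφ g) (hφ.1.nonneg g)
        (bpmsSup_nonneg hne f))
  · intro f n hn
    refine le_antisymm (bpmsSup_le hne fun φ hφ => ?_) ?_
    · rw [hφ.1.pow_mul f n hn]
      exact pow_le_pow_left₀ (hφ.1.nonneg f) (le_bpmsSup hφ f) n
    · -- (bpmsSup J f) ^ n ≤ bpmsSup J (f ^ n), via n-th roots
      set y := bpmsSup J (f ^ n) with hy
      have hy0 : 0 ≤ y := bpmsSup_nonneg hne _
      set z := y ^ ((n : ℝ)⁻¹) with hz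
      have hz0 : 0 ≤ z := Real.rpow_nonneg hy0 _
      have hzn : z ^ n = y := by
        rw [hz, ← Real.rpow_natCast (y ^ ((n : ℝ)⁻¹)) n, ← Real.rpow_mul hy0]
        rw [inv_mul_cancel₀ (by exact_mod_cast Nat.one_le_iff_ne_zero.mp hn), Real.rpow_one]
      have hsup_le : bpmsSup J f ≤ z := by
        apply bpmsSup_le hne
        intro φ hφ
        have h1 : (φ f) ^ n ≤ z ^ n := by
          rw [hzn, ← hφ.1.pow_mul f n hn]
          exact le_bpmsSup hφ (f ^ n)
        exact le_of_pow_le_pow_left₀ (Nat.one_le_iff_ne_zero.mp hn) hz0 h1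
      calc (bpmsSup J f) ^ n ≤ z ^ n :=
            pow_le_pow_left₀ (bpmsSup_nonneg hne f) hsup_le n
        _ = y := hzn
  · exact ⟨1, one_pos, fun f => by simpa using bpmsSup_le_norm hne f⟩

lemma bpmsSup_eq_zero_of_mem {J : Ideal A} (hne : (bpmsOn J).Nonempty) {f : A} (hf : f ∈ J) :
    bpmsSup J f = 0 :=
  le_antisymm (bpmsSup_le hne fun φ hφ => le_of_eq (hφ.2 f hf)) (bpmsSup_nonneg hne f)

/-- The kernel of a bounded power-multiplicative seminorm, as an ideal. -/
noncomputable def kerIdeal (φ : A → ℝ) (h : IsBddPowMulSeminorm φ) : Ideal A where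
  carrier := {f | φ f = 0}
  zero_mem' := h.map_zero
  add_mem' := by
    intro a b ha hb
    simp only [Set.mem_setOf_eq] at *
    refine le_antisymm ?_ (h.nonneg _)
    have := h.nonarch a b
    rw [ha, hb] at this
    simpa using this
  smul_mem' := by
    intro c x hx
    simp only [Set.mem_setOf_eq, smul_eq_mul] at *
    refine le_antisymm ?_ (h.nonneg _)
    have := h.submul c x
    rw [hx, mul_zero] at this
    exact this

end Aux

/-- Every spectrally reduced ideal of a seminormed ring is contained in a maximal
spectrally reduced ideal. -/
theorem exists_maximal_spectrally_reduced_ideal_ge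
    {A : Type*} [SeminormedCommRing A] [NormOneClass A]
    (hA : IsNonarchimedean (fun a : A => ‖a‖))
    (I : Ideal A) (hI : IsSpectrallyReduced I) :
    ∃ m : Ideal A, IsSpectrallyReduced m ∧ I ≤ m ∧
      ∀ J : Ideal A, IsSpectrallyReduced J → m ≤ J → J = m := by
  -- notation
  classical
  have hne_of_sr : ∀ J : Ideal A, IsSpectrallyReduced J → (bpmsOn J).Nonempty := by
    rintro J ⟨φ, hφ, hker⟩
    exact ⟨φ, hφ, fun g hg => (hker g).mp hg⟩
  have hub : ∀ c ⊆ {J : Ideal A | IsSpectrallyReduced J}, IsChain (· ≤ ·) c →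
      ∀ y ∈ c, ∃ ub ∈ {J : Ideal A | IsSpectrallyReduced J}, ∀ z ∈ c, z ≤ ub := by
    intro c hcs hchain y hyc
    -- define ψ = inf over J ∈ c of bpmsSup J
    set ψ : A → ℝ := fun f => sInf ((fun J => bpmsSup J f) '' c) with hψdef
    have hcne : c.Nonempty := ⟨y, hyc⟩
    have hnej : ∀ J ∈ c, (bpmsOn J).Nonempty := fun J hJ => hne_of_sr J (hcs hJ)
    have hbdd : ∀ f : A, BddBelow ((fun J => bpmsSup J f) '' c) := by
      intro f
      refine ⟨0, ?_⟩
      rintro x ⟨J, hJ, rfl⟩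
      exact bpmsSup_nonneg (hnej J hJ) f
    have hψ_le : ∀ (J : Ideal A), J ∈ c → ∀ f, ψ f ≤ bpmsSup J f := by
      intro J hJ f
      exact csInf_le (hbdd f) ⟨J, hJ, rfl⟩
    have hψ_nonneg : ∀ f, 0 ≤ ψ f := by
      intro f
      apply le_csInf (hcne.image _)
      rintro x ⟨J, hJ, rfl⟩
      exact bpmsSup_nonneg (hnej J hJ) f
    -- near-attainment of the infimum at a single chain element
    have hexists : ∀ (f g : A), ∀ ε > 0, ∃ J ∈ c,
        bpmsSup J f < ψ f + ε ∧ bpmsSup J g < ψ g + ε := by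
      intro f g ε hε
      obtain ⟨x, ⟨J₁, hJ₁, rfl⟩, hx⟩ := exists_lt_of_csInf_lt (hcne.image _)
        (show sInf ((fun J => bpmsSup J f) '' c) < ψ f + ε by
          exact lt_of_le_of_lt (le_refl _) (by simpa [hψdef] using lt_add_of_pos_right (ψ f) hε))
      obtain ⟨x', ⟨J₂, hJ₂, rfl⟩, hx'⟩ := exists_lt_of_csInf_lt (hcne.image _)
        (show sInf ((fun J => bpmsSup J g) '' c) < ψ g + ε by
          exact lt_of_le_of_lt (le_refl _) (by simpa [hψdef] using lt_add_of_pos_right (ψ g) hε))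
      rcases eq_or_ne J₁ J₂ with rfl | hne12
      · exact ⟨J₁, hJ₁, hx, hx'⟩
      rcases hchain hJ₁ hJ₂ hne12 with h12 | h21
      · exact ⟨J₂, hJ₂, lt_of_le_of_lt (bpmsSup_antitone h12 (hnej J₂ hJ₂) f) hx, hx'⟩
      · exact ⟨J₁, hJ₁, hx, lt_of_le_of_lt (bpmsSup_antitone h21 (hnej J₁ hJ₁) g) hx'⟩
    have hψ_bpms : IsBddPowMulSeminorm ψ := by
      constructor
      · exact hψ_nonneg
      · refine le_antisymm ?_ (hψ_nonneg 0)
        obtain ⟨J, hJ⟩ := hcne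
        exact (hψ_le J hJ 0).trans (le_of_eq ((bpmsSup_isBdd (hnej J hJ)).map_zero))
      · refine le_antisymm ?_ ?_
        · obtain ⟨J, hJ⟩ := hcne
          exact (hψ_le J hJ 1).trans (le_of_eq ((bpmsSup_isBdd (hnej J hJ)).map_one))
        · apply le_csInf (hcne.image _)
          rintro x ⟨J, hJ, rfl⟩
          exact le_of_eq ((bpmsSup_isBdd (hnej J hJ)).map_one).symm
      · intro f
        have : ((fun J => bpmsSup J (-f)) '' c) = ((fun J => bpmsSup J f) '' c) := by
          apply Set.image_congr
          intro J hJ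
          exact (bpmsSup_isBdd (hnej J hJ)).map_neg f
        simp only [hψdef]
        rw [this]
      · -- nonarch
        intro f g
        refine le_of_forall_pos_le_add ?_
        intro ε hε
        obtain ⟨J, hJ, h1, h2⟩ := hexists f g ε hε
        calc ψ (f + g) ≤ bpmsSup J (f + g) := hψ_le J hJ _
          _ ≤ max (bpmsSup J f) (bpmsSup J g) := (bpmsSup_isBdd (hnej J hJ)).nonarch f g
          _ ≤ max (ψ f + ε) (ψ g + ε) := max_le_max h1.le h2.le
          _ = max (ψ f) (ψ g) + ε := max_add_add_right _ _ _
      · -- submul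
        intro f g
        have key : ∀ ε > (0:ℝ), ψ (f * g) ≤ (ψ f + ε) * (ψ g + ε) := by
          intro ε hε
          obtain ⟨J, hJ, h1, h2⟩ := hexists f g ε hε
          calc ψ (f * g) ≤ bpmsSup J (f * g) := hψ_le J hJ _
            _ ≤ bpmsSup J f * bpmsSup J g := (bpmsSup_isBdd (hnej J hJ)).submul f g
            _ ≤ (ψ f + ε) * (ψ g + ε) := by
                apply mul_le_mul h1.le h2.le (bpmsSup_nonneg (hnej J hJ) g)
                linarith [hψ_nonneg f]
        have htend : Filter.Tendsto (fun ε : ℝ => (ψ f + ε) * (ψ g + ε)) (nhdsWithin 0 (Set.Ioi 0))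
            (nhds ((ψ f + 0) * (ψ g + 0))) := by
          apply Filter.Tendsto.mono_left _ nhdsWithin_le_nhds
          exact ((continuous_const.add continuous_id).mul
            (continuous_const.add continuous_id)).tendsto 0
        rw [add_zero, add_zero] at htend
        refine ge_of_tendsto htend ?_
        filter_upwards [self_mem_nhdsWithin] with ε hε
        exact key ε hε
      · -- pow_mul
        intro f n hn
        refine le_antisymm ?_ ?_
        · have key : ∀ ε > (0:ℝ), ψ (f ^ n) ≤ (ψ f + ε) ^ n := by
            intro ε hε
            obtain ⟨J, hJ, h1, _⟩ := hexists f f ε hε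
            calc ψ (f ^ n) ≤ bpmsSup J (f ^ n) := hψ_le J hJ _
              _ = (bpmsSup J f) ^ n := (bpmsSup_isBdd (hnej J hJ)).pow_mul f n hn
              _ ≤ (ψ f + ε) ^ n :=
                  pow_le_pow_left₀ (bpmsSup_nonneg (hnej J hJ) f) h1.le n
          have htend : Filter.Tendsto (fun ε : ℝ => (ψ f + ε) ^ n) (nhdsWithin 0 (Set.Ioi 0))
              (nhds ((ψ f + 0) ^ n)) := by
            apply Filter.Tendsto.mono_left _ nhdsWithin_le_nhds
            exact ((continuous_const.add continuous_id).pow n).tendsto 0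
          rw [add_zero] at htend
          refine ge_of_tendsto htend ?_
          filter_upwards [self_mem_nhdsWithin] with ε hε
          exact key ε hε
        · apply le_csInf (hcne.image _)
          rintro x ⟨J, hJ, rfl⟩
          show ψ f ^ n ≤ bpmsSup J (f ^ n)
          rw [(bpmsSup_isBdd (hnej J hJ)).pow_mul f n hn]
          exact pow_le_pow_left₀ (hψ_nonneg f) (hψ_le J hJ f) n
      · refine ⟨1, one_pos, fun f => ?_⟩
        obtain ⟨J, hJ⟩ := hcne
        simpa using (hψ_le J hJ f).trans (bpmsSup_le_norm (hnej J hJ) f)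
    -- the upper bound: the kernel of ψ
    refine ⟨kerIdeal ψ hψ_bpms, ⟨ψ, hψ_bpms, fun f => Iff.rfl⟩, ?_⟩
    intro J hJ f hf
    show ψ f = 0
    refine le_antisymm ?_ (hψ_nonneg f)
    exact (hψ_le J hJ f).trans (le_of_eq (bpmsSup_eq_zero_of_mem (hnej J hJ) hf))
  obtain ⟨m, hIm, hms, hmax⟩ := zorn_le_nonempty₀ {J : Ideal A | IsSpectrallyReduced J} hub I hI
  exact ⟨m, hms, hIm, fun J hJ hmJ => le_antisymm (hmax hJ hmJ) hmJ⟩
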